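/- Let d > 0 and define j : ℝ → ℝ by j(s) = 0 for s < 0 and j(s) = −d e^{−s} + (d/2)s² + d for s ≥ 0. Then: (i) j is locally Lipschitz on ℝ; (ii) its Clarke subdifferential is given by ∂j(s) = {0} for s < 0, ∂j(0) = [0, d], and ∂j(s) = {d e^{−s} + d s} for s > 0; (iii) every ξ ∈ ∂j(s) satisfies |ξ| ≤ d(1 + |s|). -/

import Mathlib

open Filter Topology Set

noncomputable section

/-- The Clarke generalized directional derivative of `φ : ℝ → ℝ` at `s` in direction `v`:
`φ⁰(s;v) = limsup_{y → s, λ ↓ 0} (φ(y + λv) − φ(y))/λ`. -/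
def clarkeDerivR (φ : ℝ → ℝ) (s v : ℝ) : ℝ :=
  Filter.limsup (fun p : ℝ × ℝ => (φ (p.1 + p.2 * v) - φ p.1) / p.2)
    ((𝓝 s) ×ˢ (𝓝[>] (0 : ℝ)))

/-- The Clarke subdifferential of `φ : ℝ → ℝ` at `s`:
`∂φ(s) = {ξ ∈ ℝ : ξ·v ≤ φ⁰(s;v) for all v ∈ ℝ}`. -/
def clarkeSubdiffR (φ : ℝ → ℝ) (s : ℝ) : Set ℝ :=
  { ξ : ℝ | ∀ v : ℝ, ξ * v ≤ clarkeDerivR φ s v }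

namespace ClarkeAux

theorem limsup_map' (u : ℝ × ℝ → ℝ) (p : ℝ → ℝ × ℝ) (l : Filter ℝ) :
    Filter.limsup u (Filter.map p l) = Filter.limsup (fun t => u (p t)) l := by
  rw [Filter.limsup, Filter.limsup, Filter.map_map]; rfl

theorem slope1 (v : ℝ) :
    Tendsto (fun t : ℝ => (1 - Real.exp (-(t*v)))/t) (𝓝[≠] (0:ℝ)) (𝓝 v) := by
  have h1 : HasDerivAt (fun t : ℝ => -(t*v)) (-v) 0 := by
    exact ((hasDerivAt_id' (0:ℝ)).mul_const v).neg.congr_deriv (by simp)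
  have h2 := h1.exp
  have h3 := (hasDerivAt_const (0:ℝ) (1:ℝ)).sub h2
  have h4 : HasDerivAt (fun t : ℝ => 1 - Real.exp (-(t*v))) v 0 := by
    exact h3.congr_deriv (by simp)
  have := hasDerivAt_iff_tendsto_slope.mp h4
  refine this.congr fun t => ?_
  simp [slope_def_field]

theorem hasDerivF (d t : ℝ) :
    HasDerivAt (fun t : ℝ => -d * Real.exp (-t) + d/2*t^2 + d) (d * Real.exp (-t) + d * t) t := by
  have h1 : HasDerivAt (fun t : ℝ => Real.exp (-t)) (-Real.exp (-t)) t := by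
    simpa using ((hasDerivAt_id t).neg.exp)
  have := ((h1.const_mul (-d)).add (((hasDerivAt_id t).pow 2).const_mul (d/2))).add_const d
  exact this.congr_deriv (by simp [id]; ring)

theorem fest (d a b : ℝ) (hd : 0 < d) (ha : 0 ≤ a) (hab : a ≤ b) :
    (-d * Real.exp (-b) + d / 2 * b ^ 2 + d) - (-d * Real.exp (-a) + d / 2 * a ^ 2 + d)
      ≤ d * (1 + b) * (b - a) := by
  have e1 : 1 - (b - a) ≤ Real.exp (-(b-a)) := by
    have := Real.add_one_le_exp (-(b-a)); linarith
  have e2 : Real.exp (-a) ≤ 1 := by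
    have := Real.exp_le_exp.mpr (show -a ≤ 0 by linarith); simpa using this
  have e5 : Real.exp (-(b-a)) ≤ 1 := by
    have := Real.exp_le_exp.mpr (show -(b-a) ≤ 0 by linarith); simpa using this
  have e3 : Real.exp (-b) = Real.exp (-a) * Real.exp (-(b-a)) := by
    rw [← Real.exp_add]; ring_nf
  have e4 : (0:ℝ) < Real.exp (-a) := Real.exp_pos _
  have k1 : Real.exp (-a) - Real.exp (-b) ≤ b - a := by
    have h : Real.exp (-a) - Real.exp (-b) = Real.exp (-a) * (1 - Real.exp (-(b-a))) := by
      rw [e3]; ring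
    rw [h]
    calc Real.exp (-a) * (1 - Real.exp (-(b-a))) ≤ 1 * (1 - Real.exp (-(b-a))) :=
          mul_le_mul_of_nonneg_right e2 (by linarith)
      _ ≤ b - a := by linarith
  have k2 : b^2 - a^2 ≤ 2*b*(b-a) := by nlinarith [sq_nonneg (b-a)]
  nlinarith [mul_le_mul_of_nonneg_left k1 hd.le, mul_le_mul_of_nonneg_left k2 hd.le]

theorem fest0 (d a b : ℝ) (hd : 0 < d) (ha : 0 ≤ a) (hab : a ≤ b) :
    0 ≤ (-d * Real.exp (-b) + d / 2 * b ^ 2 + d) - (-d * Real.exp (-a) + d / 2 * a ^ 2 + d) := by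
  have e2 : Real.exp (-b) ≤ Real.exp (-a) := Real.exp_le_exp.mpr (by linarith)
  nlinarith [mul_nonneg (sub_nonneg.mpr hab) (show (0:ℝ) ≤ a + b by linarith),
    mul_nonneg hd.le (sub_nonneg.mpr e2)]

section Main
variable {d : ℝ} (hd : 0 < d) {j : ℝ → ℝ}
  (hj : ∀ s : ℝ, j s = if s < 0 then 0 else -d * Real.exp (-s) + d / 2 * s ^ 2 + d)
include hd hj

omit hd in
theorem jmax (t : ℝ) :
    j t = -d * Real.exp (-(max t 0)) + d / 2 * (max t 0) ^ 2 + d := by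
  rw [hj]
  split_ifs with h
  · rw [max_eq_right h.le]; simp
  · rw [max_eq_left (not_lt.mp h)]

theorem jest {a b : ℝ} (hab : a ≤ b) :
    0 ≤ j b - j a ∧ j b - j a ≤ d * (1 + max b 0) * (b - a) := by
  rw [jmax hj, jmax hj]
  have h0a : (0:ℝ) ≤ max a 0 := le_max_right _ _
  have hab' : max a 0 ≤ max b 0 := max_le_max hab le_rfl
  constructor
  · exact fest0 d _ _ hd h0a hab'
  · calc _ ≤ d * (1 + max b 0) * (max b 0 - max a 0) := fest d _ _ hd h0a hab'
      _ ≤ d * (1 + max b 0) * (b - a) := by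
        apply mul_le_mul_of_nonneg_left _ (by positivity)
        rcases max_cases a 0 with ⟨e, he⟩ | ⟨e, he⟩ <;>
          rcases max_cases b 0 with ⟨e2, he2⟩ | ⟨e2, he2⟩ <;> rw [e, e2] <;> linarith

theorem jlip : LocallyLipschitz j := by
  intro x
  refine ⟨(d * (2 + |x|)).toNNReal, Metric.ball x 1, Metric.ball_mem_nhds x one_pos, ?_⟩
  rw [lipschitzOnWith_iff_dist_le_mul]
  have key : ∀ a ∈ Metric.ball x 1, ∀ b ∈ Metric.ball x 1, a ≤ b →
      dist (j b) (j a) ≤ d * (2 + |x|) * dist b a := by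
    intro a ha b hb hab
    obtain ⟨h1, h2⟩ := jest hd hj hab
    rw [Real.dist_eq, Real.dist_eq, abs_of_nonneg h1, abs_of_nonneg (by linarith : (0:ℝ) ≤ b - a)]
    refine h2.trans (mul_le_mul_of_nonneg_right ?_ (by linarith))
    have hb' : |b| ≤ |x| + 1 := by
      have := mem_ball_iff_norm.mp hb
      rw [Real.norm_eq_abs] at this
      calc |b| = |x + (b - x)| := by ring_nf
        _ ≤ |x| + |b - x| := abs_add_le _ _
        _ ≤ |x| + 1 := by linarith
    have : max b 0 ≤ |x| + 1 := max_le ((le_abs_self b).trans hb') (by positivity)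
    nlinarith
  intro a ha b hb
  have hK : ((d * (2 + |x|)).toNNReal : ℝ) = d * (2 + |x|) := by
    rw [Real.coe_toNNReal _ (by positivity)]
  rw [hK]
  rcases le_total a b with h | h
  · rw [dist_comm (j a), dist_comm a]; exact key a ha b hb h
  · exact key b hb a ha h

/-- The difference quotient. -/
private def Q (j : ℝ → ℝ) (v : ℝ) : ℝ × ℝ → ℝ :=
  fun p => (j (p.1 + p.2 * v) - j p.1) / p.2

omit hd hj in
theorem ev_box (s : ℝ) {δ : ℝ} (hδ : 0 < δ) :
    ∀ᶠ p : ℝ × ℝ in (𝓝 s) ×ˢ (𝓝[>] (0:ℝ)), |p.1 - s| < δ ∧ 0 < p.2 ∧ p.2 < δ := by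
  have h1 : ∀ᶠ y in 𝓝 s, |y - s| < δ := eventually_abs_sub_lt s hδ
  have h2 : ∀ᶠ t in 𝓝[>] (0:ℝ), 0 < t ∧ t < δ := by
    have ha : ∀ᶠ t in 𝓝[>] (0:ℝ), 0 < t := eventually_mem_nhdsWithin
    have hb : ∀ᶠ t in 𝓝[>] (0:ℝ), t < δ := by
      apply eventually_nhdsWithin_of_eventually_nhds
      have := eventually_abs_sub_lt (0:ℝ) hδ
      filter_upwards [this] with t ht
      have := abs_lt.mp (by simpa using ht)
      linarith [this.2]
    exact ha.and hb
  exact h1.prod_mk h2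

theorem cd_neg {s : ℝ} (hs : s < 0) (v : ℝ) : clarkeDerivR j s v = 0 := by
  have hδ : 0 < min (-s/2) (-s/(2*(|v|+1))) := by
    exact lt_min (by linarith) (div_pos (by linarith) (by positivity))
  have hev : ∀ᶠ p : ℝ × ℝ in (𝓝 s) ×ˢ (𝓝[>] (0:ℝ)),
      (fun p : ℝ × ℝ => (j (p.1 + p.2 * v) - j p.1) / p.2) p = (fun _ => (0:ℝ)) p := by
    filter_upwards [ev_box s hδ] with p hp
    obtain ⟨h1, h2, h3⟩ := hp
    have hy : p.1 < 0 := by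
      have := (abs_lt.mp h1).2
      have := min_le_left (-s/2) (-s/(2*(|v|+1)))
      linarith
    have hyv : p.1 + p.2 * v < 0 := by
      have hb1 := (abs_lt.mp h1).2
      have hb2 : p.2 < -s/(2*(|v|+1)) := lt_of_lt_of_le h3 (min_le_right _ _)
      have : p.2 * v ≤ p.2 * |v| := mul_le_mul_of_nonneg_left (le_abs_self v) h2.le
      have h4 : p.2 * |v| < -s/2 := by
        calc p.2 * |v| ≤ p.2 * (|v|+1) := by nlinarith [abs_nonneg v]
          _ < (-s/(2*(|v|+1))) * (|v|+1) := by
              apply mul_lt_mul_of_pos_right hb2 (by positivity)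
          _ = -s/2 := by field_simp
      have h5 := min_le_left (-s/2) (-s/(2*(|v|+1)))
      nlinarith
    simp only [hj, if_pos hy, if_pos hyv, sub_zero, zero_div, sub_self]
  unfold clarkeDerivR
  rw [limsup_congr hev, limsup_const]

theorem cd_pos {s : ℝ} (hs : 0 < s) (v : ℝ) :
    clarkeDerivR j s v = (d * Real.exp (-s) + d * s) * v := by
  haveI : ((𝓝 s) ×ˢ (𝓝[>] (0:ℝ))).NeBot := Filter.prod_neBot.mpr ⟨inferInstance, inferInstance⟩
  have t1 : Tendsto (fun p : ℝ × ℝ => p.1) ((𝓝 s) ×ˢ (𝓝[>] (0:ℝ))) (𝓝 s) := tendsto_fst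
  have t2 : Tendsto (fun p : ℝ × ℝ => p.2) ((𝓝 s) ×ˢ (𝓝[>] (0:ℝ))) (𝓝[≠] (0:ℝ)) :=
    tendsto_snd.mono_right (nhdsWithin_mono 0 fun x hx => ne_of_gt hx)
  have hGa : Tendsto (fun p : ℝ × ℝ => d * Real.exp (-p.1)) ((𝓝 s) ×ˢ (𝓝[>] (0:ℝ)))
      (𝓝 (d * Real.exp (-s))) := ((Real.continuous_exp.tendsto _).comp t1.neg).const_mul d
  have hGb : Tendsto (fun p : ℝ × ℝ => (1 - Real.exp (-(p.2*v)))/p.2) ((𝓝 s) ×ˢ (𝓝[>] (0:ℝ)))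
      (𝓝 v) := (slope1 v).comp t2
  have hGc : Tendsto (fun p : ℝ × ℝ => d*p.1*v) ((𝓝 s) ×ˢ (𝓝[>] (0:ℝ))) (𝓝 (d*s*v)) :=
    (t1.const_mul d).mul_const v
  have hGd : Tendsto (fun p : ℝ × ℝ => d/2*p.2*v^2) ((𝓝 s) ×ˢ (𝓝[>] (0:ℝ))) (𝓝 (d/2*0*v^2)) := by
    have h : Tendsto (fun p : ℝ × ℝ => p.2) ((𝓝 s) ×ˢ (𝓝[>] (0:ℝ))) (𝓝 0) :=
      tendsto_snd.mono_right nhdsWithin_le_nhds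
    exact (h.const_mul (d/2)).mul_const (v^2)
  have hG : Tendsto (fun p : ℝ × ℝ =>
      d * Real.exp (-p.1) * ((1 - Real.exp (-(p.2*v)))/p.2) + d*p.1*v + d/2*p.2*v^2)
      ((𝓝 s) ×ˢ (𝓝[>] (0:ℝ))) (𝓝 (d * Real.exp (-s) * v + d*s*v + d/2*0*v^2)) :=
    ((hGa.mul hGb).add hGc).add hGd
  have hδ : 0 < min (s/2) (s/(2*(|v|+1))) :=
    lt_min (by linarith) (div_pos (by linarith) (by positivity))
  have hev : ∀ᶠ p : ℝ × ℝ in (𝓝 s) ×ˢ (𝓝[>] (0:ℝ)),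
      (fun p : ℝ × ℝ =>
        d * Real.exp (-p.1) * ((1 - Real.exp (-(p.2*v)))/p.2) + d*p.1*v + d/2*p.2*v^2) p
      = (fun p : ℝ × ℝ => (j (p.1 + p.2 * v) - j p.1) / p.2) p := by
    filter_upwards [ev_box s hδ] with p hp
    obtain ⟨h1, h2, h3⟩ := hp
    have hb1 := abs_lt.mp h1
    have h5 := min_le_left (s/2) (s/(2*(|v|+1)))
    have hy : 0 < p.1 := by linarith [hb1.1]
    have hyv : 0 ≤ p.1 + p.2 * v := by
      have hb2 : p.2 < s/(2*(|v|+1)) := lt_of_lt_of_le h3 (min_le_right _ _)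
      have hv1 : -(p.2 * v) ≤ p.2 * |v| := by
        rw [← mul_neg]
        exact mul_le_mul_of_nonneg_left (neg_le_abs v) h2.le
      have h4 : p.2 * |v| < s/2 := by
        calc p.2 * |v| ≤ p.2 * (|v|+1) := by nlinarith [abs_nonneg v]
          _ < (s/(2*(|v|+1))) * (|v|+1) := mul_lt_mul_of_pos_right hb2 (by positivity)
          _ = s/2 := by field_simp
      nlinarith [hb1.1]
    have hexp : Real.exp (-(p.1 + p.2*v)) = Real.exp (-p.1) * Real.exp (-(p.2*v)) := by
      rw [← Real.exp_add]; ring_nf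
    simp only [hj, if_neg (not_lt.mpr hy.le), if_neg (not_lt.mpr hyv)]
    rw [hexp]
    field_simp
    ring
  have hQ : Tendsto (fun p : ℝ × ℝ => (j (p.1 + p.2 * v) - j p.1) / p.2)
      ((𝓝 s) ×ˢ (𝓝[>] (0:ℝ))) (𝓝 (d * Real.exp (-s) * v + d*s*v + d/2*0*v^2)) :=
    hG.congr' hev
  have hval : d * Real.exp (-s) * v + d*s*v + d/2*0*v^2 = (d * Real.exp (-s) + d * s) * v := by
    ring
  rw [hval] at hQ
  exact hQ.limsup_eq

omit hd hj in
theorem cobound_map (u : ℝ × ℝ → ℝ) (p : ℝ → ℝ × ℝ) (l : Filter ℝ)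
    (h : IsCoboundedUnder (· ≤ ·) l (fun t => u (p t))) :
    IsCoboundedUnder (· ≤ ·) (Filter.map p l) u := by
  unfold Filter.IsCoboundedUnder at h ⊢
  rwa [Filter.map_map]

theorem qbound (v : ℝ) : ∀ᶠ p : ℝ × ℝ in (𝓝 (0:ℝ)) ×ˢ (𝓝[>] (0:ℝ)),
    |(j (p.1 + p.2 * v) - j p.1) / p.2| ≤ d*(2+|v|)*|v| := by
  filter_upwards [ev_box 0 one_pos] with p hp
  obtain ⟨h1, h2, h3⟩ := hp
  rw [sub_zero] at h1
  have hb1 := abs_lt.mp h1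
  rw [abs_div, abs_of_pos h2, div_le_iff₀ h2]
  rcases le_total 0 (p.2 * v) with h | h
  · obtain ⟨hl0, hu⟩ := jest hd hj (show p.1 ≤ p.1 + p.2 * v by linarith)
    rw [abs_of_nonneg hl0]
    have hm : max (p.1 + p.2*v) 0 ≤ 1 + |v| := by
      apply max_le _ (by positivity)
      have : p.2 * v ≤ p.2 * |v| := mul_le_mul_of_nonneg_left (le_abs_self v) h2.le
      nlinarith [abs_nonneg v, hb1.2]
    have hvv : p.2 * v ≤ p.2 * |v| := mul_le_mul_of_nonneg_left (le_abs_self v) h2.le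
    calc j (p.1+p.2*v) - j p.1 ≤ d * (1 + max (p.1+p.2*v) 0) * (p.1 + p.2*v - p.1) := hu
      _ = d * (1 + max (p.1+p.2*v) 0) * (p.2*v) := by ring
      _ ≤ d * (2+|v|) * (p.2*v) :=
          mul_le_mul_of_nonneg_right (mul_le_mul_of_nonneg_left (by linarith) hd.le) h
      _ ≤ d * (2+|v|) * (p.2*|v|) := by
          apply mul_le_mul_of_nonneg_left hvv (by positivity)
      _ = d*(2+|v|)*|v| * p.2 := by ring
  · obtain ⟨hl0, hu⟩ := jest hd hj (show p.1 + p.2 * v ≤ p.1 by linarith)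
    rw [abs_of_nonpos (by linarith : j (p.1 + p.2*v) - j p.1 ≤ 0)]
    have hm : max p.1 0 ≤ 1 := max_le hb1.2.le zero_le_one
    have hvv : -(p.2 * v) ≤ p.2 * |v| := by
      rw [← mul_neg]; exact mul_le_mul_of_nonneg_left (neg_le_abs v) h2.le
    calc -(j (p.1+p.2*v) - j p.1) = j p.1 - j (p.1+p.2*v) := by ring
      _ ≤ d * (1 + max p.1 0) * (p.1 - (p.1+p.2*v)) := hu
      _ = d * (1 + max p.1 0) * (-(p.2*v)) := by ring
      _ ≤ d * (2+|v|) * (-(p.2*v)) :=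
          mul_le_mul_of_nonneg_right
            (mul_le_mul_of_nonneg_left (by linarith [abs_nonneg v]) hd.le) (by linarith)
      _ ≤ d * (2+|v|) * (p.2*|v|) := by
          apply mul_le_mul_of_nonneg_left hvv (by positivity)
      _ = d*(2+|v|)*|v| * p.2 := by ring

set_option maxHeartbeats 1000000 in
theorem cd_zero (v : ℝ) : clarkeDerivR j 0 v = d * max v 0 := by
  haveI : ((𝓝 (0:ℝ)) ×ˢ (𝓝[>] (0:ℝ))).NeBot := Filter.prod_neBot.mpr ⟨inferInstance, inferInstance⟩
  have hbdd_le : IsBoundedUnder (· ≤ ·) ((𝓝 (0:ℝ)) ×ˢ (𝓝[>] (0:ℝ)))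
      (fun p : ℝ × ℝ => (j (p.1 + p.2 * v) - j p.1) / p.2) :=
    isBoundedUnder_of_eventually_le ((qbound hd hj v).mono fun p h => (abs_le.mp h).2)
  have hcob_le : IsCoboundedUnder (· ≤ ·) ((𝓝 (0:ℝ)) ×ˢ (𝓝[>] (0:ℝ)))
      (fun p : ℝ × ℝ => (j (p.1 + p.2 * v) - j p.1) / p.2) :=
    isCoboundedUnder_le_of_eventually_le _ ((qbound hd hj v).mono fun p h => (abs_le.mp h).1)
  rcases lt_trichotomy v 0 with hv | hv | hv
  · -- v < 0 : limsup = 0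
    rw [max_eq_right hv.le, mul_zero]
    apply le_antisymm
    · apply limsup_le_of_le hcob_le
      filter_upwards [ev_box 0 one_pos] with p hp
      obtain ⟨h1, h2, h3⟩ := hp
      have hnum : j (p.1 + p.2*v) - j p.1 ≤ 0 := by
        have := (jest hd hj (show p.1 + p.2 * v ≤ p.1 by nlinarith)).1
        linarith
      exact div_nonpos_iff.mpr (Or.inr ⟨hnum, h2.le⟩)
    · have hpt : Tendsto (fun t : ℝ => ((t*v, t) : ℝ × ℝ)) (𝓝[>] (0:ℝ))
          ((𝓝 (0:ℝ)) ×ˢ (𝓝[>] (0:ℝ))) := by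
        refine Tendsto.prodMk ?_ tendsto_id
        have : Tendsto (fun t : ℝ => t*v) (𝓝 (0:ℝ)) (𝓝 (0*v)) := tendsto_id.mul_const v
        rw [zero_mul] at this
        exact this.mono_left nhdsWithin_le_nhds
      have hq0 : Tendsto (fun t : ℝ => (j ((t*v) + t * v) - j (t*v)) / t) (𝓝[>] (0:ℝ))
          (𝓝 0) := by
        apply Tendsto.congr' _ tendsto_const_nhds
        filter_upwards [eventually_mem_nhdsWithin] with t (ht : (0:ℝ) < t)
        have ha : t*v + t*v < 0 := by nlinarith
        have hb : t*v < 0 := by nlinarith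
        simp [hj, if_pos ha, if_pos hb]
      calc (0:ℝ) = Filter.limsup (fun t : ℝ =>
            (fun p : ℝ × ℝ => (j (p.1 + p.2 * v) - j p.1) / p.2) ((t*v, t))) (𝓝[>] (0:ℝ)) :=
            (hq0.limsup_eq).symm
        _ = Filter.limsup (fun p : ℝ × ℝ => (j (p.1 + p.2 * v) - j p.1) / p.2)
            (Filter.map (fun t : ℝ => ((t*v, t) : ℝ × ℝ)) (𝓝[>] (0:ℝ))) :=
            (limsup_map' (fun p : ℝ × ℝ => (j (p.1 + p.2 * v) - j p.1) / p.2)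
              (fun t : ℝ => ((t*v, t) : ℝ × ℝ)) (𝓝[>] (0:ℝ))).symm
        _ ≤ _ := by
            apply limsup_le_limsup_of_le hpt _ hbdd_le
            apply cobound_map
            exact (hq0.isBoundedUnder_ge).isCoboundedUnder_le
  · -- v = 0
    subst hv
    have heq : (fun p : ℝ × ℝ => (j (p.1 + p.2 * 0) - j p.1) / p.2) = fun _ => (0:ℝ) := by
      funext p; simp
    unfold clarkeDerivR
    rw [heq, limsup_const]
    simp
  · -- v > 0 : limsup = d * v
    rw [max_eq_left hv.le]
    apply le_antisymm
    · -- upper bound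
      have hx : Tendsto (fun p : ℝ × ℝ => p.1 + p.2*v) ((𝓝 (0:ℝ)) ×ˢ (𝓝[>] (0:ℝ)))
          (𝓝 0) := by
        have h2 : Tendsto (fun p : ℝ × ℝ => p.2) ((𝓝 (0:ℝ)) ×ˢ (𝓝[>] (0:ℝ))) (𝓝 0) :=
          tendsto_snd.mono_right nhdsWithin_le_nhds
        have := tendsto_fst.add (h2.mul_const v)
        simpa using this
      have hr : Tendsto (fun p : ℝ × ℝ => d*(1 + max (p.1 + p.2*v) 0)*v)
          ((𝓝 (0:ℝ)) ×ˢ (𝓝[>] (0:ℝ))) (𝓝 (d*(1 + max 0 0)*v)) := by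
        exact (((hx.max tendsto_const_nhds).const_add 1).const_mul d).mul_const v
      have hrval : d*(1 + max (0:ℝ) 0)*v = d * v := by simp
      rw [hrval] at hr
      have hev : ∀ᶠ p : ℝ × ℝ in (𝓝 (0:ℝ)) ×ˢ (𝓝[>] (0:ℝ)),
          (j (p.1 + p.2 * v) - j p.1) / p.2 ≤ d*(1 + max (p.1 + p.2*v) 0)*v := by
        filter_upwards [ev_box 0 one_pos] with p hp
        obtain ⟨h1, h2, h3⟩ := hp
        have hu := (jest hd hj (show p.1 ≤ p.1 + p.2 * v by nlinarith)).2
        rw [div_le_iff₀ h2]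
        calc j (p.1 + p.2*v) - j p.1 ≤ d * (1 + max (p.1+p.2*v) 0) * (p.1 + p.2*v - p.1) := hu
          _ = d*(1 + max (p.1 + p.2*v) 0)*v * p.2 := by ring
      calc Filter.limsup (fun p : ℝ × ℝ => (j (p.1 + p.2 * v) - j p.1) / p.2)
            ((𝓝 (0:ℝ)) ×ˢ (𝓝[>] (0:ℝ)))
          ≤ Filter.limsup (fun p : ℝ × ℝ => d*(1 + max (p.1 + p.2*v) 0)*v)
            ((𝓝 (0:ℝ)) ×ˢ (𝓝[>] (0:ℝ))) :=
            limsup_le_limsup hev hcob_le hr.isBoundedUnder_le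
        _ = d * v := hr.limsup_eq
    · -- lower bound via the path t ↦ (0, t)
      have hpt : Tendsto (fun t : ℝ => (((0:ℝ), t) : ℝ × ℝ)) (𝓝[>] (0:ℝ))
          ((𝓝 (0:ℝ)) ×ˢ (𝓝[>] (0:ℝ))) := Tendsto.prodMk tendsto_const_nhds tendsto_id
      have hslope : Tendsto (fun u : ℝ => (-d * Real.exp (-u) + d/2*u^2 + d)/u)
          (𝓝[≠] (0:ℝ)) (𝓝 d) := by
        have h := hasDerivAt_iff_tendsto_slope.mp (hasDerivF d 0)
        have hval : d * Real.exp (-(0:ℝ)) + d * 0 = d := by simp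
        rw [hval] at h
        refine h.congr fun u => ?_
        simp [slope_def_field]
      have hm : Tendsto (fun t : ℝ => t*v) (𝓝[>] (0:ℝ)) (𝓝[≠] (0:ℝ)) := by
        have hbase : Tendsto (fun t : ℝ => t*v) (𝓝[>] (0:ℝ)) (𝓝 0) := by
          have : Tendsto (fun t : ℝ => t*v) (𝓝 (0:ℝ)) (𝓝 (0*v)) := tendsto_id.mul_const v
          rw [zero_mul] at this
          exact this.mono_left nhdsWithin_le_nhds
        rw [tendsto_nhdsWithin_iff]
        refine ⟨hbase, ?_⟩
        filter_upwards [eventually_mem_nhdsWithin] with t (ht : (0:ℝ) < t)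
        exact ne_of_gt (by positivity)
      have hq : Tendsto (fun t : ℝ => (j ((0:ℝ) + t * v) - j 0) / t) (𝓝[>] (0:ℝ))
          (𝓝 (d * v)) := by
        have hcomp := (hslope.comp hm).mul_const v
        apply Tendsto.congr' _ hcomp
        filter_upwards [eventually_mem_nhdsWithin] with t (ht : (0:ℝ) < t)
        have htv : 0 < t*v := by positivity
        have hj0 : j 0 = 0 := by rw [hj]; simp
        show _ = (j (0 + t * v) - j 0) / t
        rw [zero_add, hj0, sub_zero, hj (t*v), if_neg (not_lt.mpr htv.le)]
        simp only [Function.comp]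
        field_simp
      calc d * v = Filter.limsup (fun t : ℝ =>
            (fun p : ℝ × ℝ => (j (p.1 + p.2 * v) - j p.1) / p.2) (((0:ℝ), t))) (𝓝[>] (0:ℝ)) :=
            (hq.limsup_eq).symm
        _ = Filter.limsup (fun p : ℝ × ℝ => (j (p.1 + p.2 * v) - j p.1) / p.2)
            (Filter.map (fun t : ℝ => (((0:ℝ), t) : ℝ × ℝ)) (𝓝[>] (0:ℝ))) :=
            (limsup_map' (fun p : ℝ × ℝ => (j (p.1 + p.2 * v) - j p.1) / p.2)
              (fun t : ℝ => (((0:ℝ), t) : ℝ × ℝ)) (𝓝[>] (0:ℝ))).symm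
        _ ≤ _ := by
            apply limsup_le_limsup_of_le hpt _ hbdd_le
            apply cobound_map
            exact (hq.isBoundedUnder_ge).isCoboundedUnder_le

end Main

end ClarkeAux

theorem example_potential_properties (d : ℝ) (hd : 0 < d)
    (j : ℝ → ℝ)
    (hj : ∀ s : ℝ, j s = if s < 0 then 0 else -d * Real.exp (-s) + d / 2 * s ^ 2 + d) :
    LocallyLipschitz j ∧
      (∀ s : ℝ, s < 0 → clarkeSubdiffR j s = {0}) ∧
      clarkeSubdiffR j 0 = Icc 0 d ∧
      (∀ s : ℝ, 0 < s → clarkeSubdiffR j s = {d * Real.exp (-s) + d * s}) ∧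
      (∀ s ξ : ℝ, ξ ∈ clarkeSubdiffR j s → |ξ| ≤ d * (1 + |s|)) := by
  have hneg : ∀ s : ℝ, s < 0 → clarkeSubdiffR j s = {0} := by
    intro s hs
    ext ξ
    simp only [clarkeSubdiffR, mem_setOf_eq, mem_singleton_iff]
    constructor
    · intro h
      have h1 := h 1
      have h2 := h (-1)
      rw [ClarkeAux.cd_neg hd hj hs] at h1 h2
      rw [mul_one] at h1
      rw [mul_neg_one] at h2
      linarith
    · rintro rfl v
      rw [ClarkeAux.cd_neg hd hj hs, zero_mul]
  have hzero : clarkeSubdiffR j 0 = Icc 0 d := by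
    ext ξ
    simp only [clarkeSubdiffR, mem_setOf_eq, mem_Icc]
    constructor
    · intro h
      have h1 := h 1
      have h2 := h (-1)
      rw [ClarkeAux.cd_zero hd hj] at h1 h2
      rw [mul_one] at h1
      rw [mul_neg_one] at h2
      norm_num at h1 h2
      exact ⟨by linarith, by linarith⟩
    · rintro ⟨h0, h1⟩ v
      rw [ClarkeAux.cd_zero hd hj]
      rcases le_total 0 v with hv | hv
      · rw [max_eq_left hv]
        exact mul_le_mul_of_nonneg_right h1 hv
      · rw [max_eq_right hv, mul_zero]
        exact mul_nonpos_of_nonneg_of_nonpos h0 hv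
  have hpos : ∀ s : ℝ, 0 < s → clarkeSubdiffR j s = {d * Real.exp (-s) + d * s} := by
    intro s hs
    ext ξ
    simp only [clarkeSubdiffR, mem_setOf_eq, mem_singleton_iff]
    constructor
    · intro h
      have h1 := h 1
      have h2 := h (-1)
      rw [ClarkeAux.cd_pos hd hj hs] at h1 h2
      rw [mul_one, mul_one] at h1
      rw [mul_neg_one, mul_neg_one] at h2
      linarith
    · rintro rfl v
      rw [ClarkeAux.cd_pos hd hj hs]
  refine ⟨ClarkeAux.jlip hd hj, hneg, hzero, hpos, ?_⟩
  intro s ξ hmem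
  rcases lt_trichotomy s 0 with hs | hs | hs
  · rw [hneg s hs, mem_singleton_iff] at hmem
    subst hmem
    rw [abs_zero]
    positivity
  · subst hs
    rw [hzero, mem_Icc] at hmem
    rw [abs_of_nonneg hmem.1]
    calc ξ ≤ d := hmem.2
      _ ≤ d * (1 + |(0:ℝ)|) := by simp
  · rw [hpos s hs, mem_singleton_iff] at hmem
    subst hmem
    have he1 : Real.exp (-s) ≤ 1 := by
      have := Real.exp_le_exp.mpr (show -s ≤ 0 by linarith)
      simpa using this
    have he0 : (0:ℝ) < Real.exp (-s) := Real.exp_pos _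
    rw [abs_of_nonneg (by positivity), abs_of_pos hs]
    nlinarith
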